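/- Every relation between classical structures is a classical morphism: if r : X ⟶ Y satisfies r = Δ_X ≫ (r_* ⊗ r) ≫ ∇_Y, then (Δ_X ⊗ 𝟙_Y) ≫ (𝟙_X ⊗ r ⊗ 𝟙_Y) ≫ (𝟙_X ⊗ ∇_Y) is positive. -/

import Mathlib

open CategoryTheory MonoidalCategory

universe v u

variable {C : Type u} [Category.{v} C] [MonoidalCategory C] [SymmetricCategory C]

/-- A dagger structure on a symmetric monoidal category: an involutive,
identity-on-objects, contravariant functor that coherently preserves the
symmetric monoidal structure. -/
structure Dagger (C : Type u) [Category.{v} C] [MonoidalCategory C]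
    [SymmetricCategory C] where
  dag : ∀ {A B : C}, (A ⟶ B) → (B ⟶ A)
  dag_comp : ∀ {A B E : C} (f : A ⟶ B) (g : B ⟶ E), dag (f ≫ g) = dag g ≫ dag f
  dag_id : ∀ A : C, dag (𝟙 A) = 𝟙 A
  dag_dag : ∀ {A B : C} (f : A ⟶ B), dag (dag f) = f
  dag_tensor : ∀ {A B A' B' : C} (f : A ⟶ B) (g : A' ⟶ B'),
    dag (f ⊗ₘ g) = dag f ⊗ₘ dag g
  dag_assoc : ∀ A B E : C, dag (α_ A B E).hom = (α_ A B E).inv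
  dag_lUnit : ∀ A : C, dag (λ_ A).hom = (λ_ A).inv
  dag_rUnit : ∀ A : C, dag (ρ_ A).hom = (ρ_ A).inv
  dag_braid : ∀ A B : C, dag (β_ A B).hom = (β_ A B).inv

/-- Positivity of an endomorphism: `e = g† ≫ g` for some `g : W ⟶ A`. -/
def Dagger.IsPositive (D : Dagger C) {A : C} (e : A ⟶ A) : Prop :=
  ∃ (W : C) (g : W ⟶ A), e = D.dag g ≫ g

/-- A classical structure: a commutative monoid object which, together with the
daggers of its multiplication and unit, is a special Frobenius algebra. -/
structure ClassicalStructure (D : Dagger C) (X : C) where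
  mul : X ⊗ X ⟶ X
  unit : 𝟙_ C ⟶ X
  mul_assoc' : (α_ X X X).hom ≫ (𝟙 X ⊗ₘ mul) ≫ mul = (mul ⊗ₘ 𝟙 X) ≫ mul
  one_mul' : (unit ⊗ₘ 𝟙 X) ≫ mul = (λ_ X).hom
  mul_one' : (𝟙 X ⊗ₘ unit) ≫ mul = (ρ_ X).hom
  mul_comm' : (β_ X X).hom ≫ mul = mul
  frobenius' : (𝟙 X ⊗ₘ D.dag mul) ≫ (α_ X X X).inv ≫ (mul ⊗ₘ 𝟙 X) = mul ≫ D.dag mul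
  special' : D.dag mul ≫ mul = 𝟙 X

namespace ClassicalStructure

variable {D : Dagger C}

/-- The comultiplication `Δ := ∇†`. -/
def comul {X : C} (S : ClassicalStructure D X) : X ⟶ X ⊗ X := D.dag S.mul

/-- The counit `⊤ := ⊥†`. -/
def counit {X : C} (S : ClassicalStructure D X) : X ⟶ 𝟙_ C := D.dag S.unit

/-- The induced Bell state `η := ⊥ ≫ Δ`. -/
def eta {X : C} (S : ClassicalStructure D X) : 𝟙_ C ⟶ X ⊗ X := S.unit ≫ S.comul

/-- The induced Bell costate `ε := ∇ ≫ ⊤`. -/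
def eps {X : C} (S : ClassicalStructure D X) : X ⊗ X ⟶ 𝟙_ C := S.mul ≫ S.counit

/-- The decoherence `Ξ := ∇ ≫ Δ`. -/
def Xi {X : C} (S : ClassicalStructure D X) : X ⊗ X ⟶ X ⊗ X := S.mul ≫ S.comul

end ClassicalStructure

/-- A morphism `f : X ⟶ Y` between classical structures is classical if
`(Δ_X ⊗ 𝟙_Y) ≫ (𝟙_X ⊗ f ⊗ 𝟙_Y) ≫ (𝟙_X ⊗ ∇_Y)` is positive. -/
def IsClassical {X Y : C} (D : Dagger C) (XS : ClassicalStructure D X)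
    (YS : ClassicalStructure D Y) (f : X ⟶ Y) : Prop :=
  D.IsPositive ((XS.comul ⊗ₘ 𝟙 Y) ≫ ((𝟙 X ⊗ₘ f) ⊗ₘ 𝟙 Y) ≫ (α_ X Y Y).hom ≫ (𝟙 X ⊗ₘ YS.mul))

/-- The conjugate `f_* := (η_Y ⊗ 𝟙_X) ≫ (𝟙_Y ⊗ f† ⊗ 𝟙_X) ≫ (𝟙_Y ⊗ ε_X)`. -/
def conjugate {X Y : C} (D : Dagger C) (XS : ClassicalStructure D X)
    (YS : ClassicalStructure D Y) (f : X ⟶ Y) : X ⟶ Y :=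
  (λ_ X).inv ≫ (YS.eta ⊗ₘ 𝟙 X) ≫ (α_ Y Y X).hom ≫ (𝟙 Y ⊗ₘ (D.dag f ⊗ₘ 𝟙 X)) ≫
    (𝟙 Y ⊗ₘ XS.eps) ≫ (ρ_ Y).hom

/-- The convolution `f ⋆ g := Δ_X ≫ (f_* ⊗ g) ≫ ∇_Y`. -/
def convol {X Y : C} (D : Dagger C) (XS : ClassicalStructure D X)
    (YS : ClassicalStructure D Y) (f g : X ⟶ Y) : X ⟶ Y :=
  XS.comul ≫ (conjugate D XS YS f ⊗ₘ g) ≫ YS.mul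

/-- A relation is a convolution-idempotent: `r = r ⋆ r`. -/
def IsRelation {X Y : C} (D : Dagger C) (XS : ClassicalStructure D X)
    (YS : ClassicalStructure D Y) (r : X ⟶ Y) : Prop :=
  r = convol D XS YS r r

/-- Single-valuedness: `r ≫ Δ_Y = Δ_X ≫ (r ⊗ r)`. -/
def SingleValued {X Y : C} (D : Dagger C) (XS : ClassicalStructure D X)
    (YS : ClassicalStructure D Y) (r : X ⟶ Y) : Prop :=
  r ≫ YS.comul = XS.comul ≫ (r ⊗ₘ r)

/-- Totality: `r ≫ ⊤_Y = ⊤_X`. -/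
def TotalRel {X Y : C} (D : Dagger C) (XS : ClassicalStructure D X)
    (YS : ClassicalStructure D Y) (r : X ⟶ Y) : Prop :=
  r ≫ YS.counit = XS.counit

/-- A function is a single-valued total relation. -/
def IsFunctionRel {X Y : C} (D : Dagger C) (XS : ClassicalStructure D X)
    (YS : ClassicalStructure D Y) (r : X ⟶ Y) : Prop :=
  IsRelation D XS YS r ∧ SingleValued D XS YS r ∧ TotalRel D XS YS r

/-- The middle-four interchange `(X ⊗ Y) ⊗ (Z ⊗ W) ⟶ (X ⊗ Z) ⊗ (Y ⊗ W)`
built from associators and the braiding. -/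
def midSwap (X Y Z W : C) : (X ⊗ Y) ⊗ (Z ⊗ W) ⟶ (X ⊗ Z) ⊗ (Y ⊗ W) :=
  (α_ X Y (Z ⊗ W)).hom ≫ (𝟙 X ⊗ₘ (α_ Y Z W).inv) ≫ (𝟙 X ⊗ₘ ((β_ Y Z).hom ⊗ₘ 𝟙 W)) ≫
    (𝟙 X ⊗ₘ (α_ Z Y W).hom) ≫ (α_ X Z (Y ⊗ W)).inv

/-- The multiplication `∇_{X⊗Y} := (𝟙_X ⊗ β_{Y,X} ⊗ 𝟙_Y) ≫ (∇_X ⊗ ∇_Y)` of the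
tensor of two classical structures. -/
def tensorMul {X Y : C} {D : Dagger C} (XS : ClassicalStructure D X)
    (YS : ClassicalStructure D Y) : (X ⊗ Y) ⊗ (X ⊗ Y) ⟶ X ⊗ Y :=
  midSwap X Y X Y ≫ (XS.mul ⊗ₘ YS.mul)

/-- The unit `⊥_{X⊗Y} := ⊥_X ⊗ ⊥_Y` of the tensor of two classical structures. -/
def tensorUnit'' {X Y : C} {D : Dagger C} (XS : ClassicalStructure D X)
    (YS : ClassicalStructure D Y) : 𝟙_ C ⟶ X ⊗ Y :=
  (λ_ (𝟙_ C)).inv ≫ (XS.unit ⊗ₘ YS.unit)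

/-- Complete positivity of `g : X ⊗ X ⟶ Y ⊗ Y` relative to the self-dual compact
structures induced by the classical structures:
`(𝟙_X ⊗ η_X ⊗ 𝟙_Y) ≫ (𝟙_X ⊗ g ⊗ 𝟙_Y) ≫ (𝟙_{X⊗Y} ⊗ ε_Y)` is positive. -/
def IsCP {X Y : C} (D : Dagger C) (XS : ClassicalStructure D X)
    (YS : ClassicalStructure D Y) (g : X ⊗ X ⟶ Y ⊗ Y) : Prop :=
  D.IsPositive ((𝟙 X ⊗ₘ (λ_ Y).inv) ≫ (𝟙 X ⊗ₘ (XS.eta ⊗ₘ 𝟙 Y)) ≫ (𝟙 X ⊗ₘ (g ⊗ₘ 𝟙 Y)) ≫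
    (𝟙 X ⊗ₘ (α_ Y Y Y).hom) ≫ (α_ X Y (Y ⊗ Y)).inv ≫ (𝟙 (X ⊗ Y) ⊗ₘ YS.eps) ≫
    (ρ_ (X ⊗ Y)).hom)

/-- A stochastic morphism: classical and total. -/
def Stochastic {X Y : C} (D : Dagger C) (XS : ClassicalStructure D X)
    (YS : ClassicalStructure D Y) (s : X ⟶ Y) : Prop :=
  IsClassical D XS YS s ∧ TotalRel D XS YS s

/-- A doubly stochastic morphism: both `s` and `s†` are stochastic. -/
def DoublyStochastic {X Y : C} (D : Dagger C) (XS : ClassicalStructure D X)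
    (YS : ClassicalStructure D Y) (s : X ⟶ Y) : Prop :=
  Stochastic D XS YS s ∧ Stochastic D YS XS (D.dag s)

section Helpers

variable {D : Dagger C}

namespace Dagger

variable (D)

lemma dag_assoc_inv (A B E : C) : D.dag (α_ A B E).inv = (α_ A B E).hom := by
  conv_lhs => rw [← D.dag_assoc]
  rw [D.dag_dag]

lemma dag_lUnit_inv (A : C) : D.dag (λ_ A).inv = (λ_ A).hom := by
  conv_lhs => rw [← D.dag_lUnit]
  rw [D.dag_dag]

lemma dag_rUnit_inv (A : C) : D.dag (ρ_ A).inv = (ρ_ A).hom := by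
  conv_lhs => rw [← D.dag_rUnit]
  rw [D.dag_dag]

lemma dag_whiskerLeft (Z : C) {A B : C} (f : A ⟶ B) :
    D.dag (Z ◁ f) = Z ◁ D.dag f := by
  rw [← id_tensorHom, D.dag_tensor, D.dag_id, id_tensorHom]

lemma dag_whiskerRight {A B : C} (f : A ⟶ B) (Z : C) :
    D.dag (f ▷ Z) = D.dag f ▷ Z := by
  rw [← tensorHom_id, D.dag_tensor, D.dag_id, tensorHom_id]

end Dagger

lemma braiding_self_inv (Z : C) : (β_ Z Z).inv = (β_ Z Z).hom := by
  rw [← cancel_epi (β_ Z Z).hom, Iso.hom_inv_id, SymmetricCategory.symmetry]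

namespace ClassicalStructure

variable {Z : C} (S : ClassicalStructure D Z)

lemma dag_comul : D.dag S.comul = S.mul := by rw [comul, D.dag_dag]

lemma dag_counit : D.dag S.counit = S.unit := by rw [counit, D.dag_dag]

lemma dag_eta : D.dag S.eta = S.eps := by
  simp only [eta, eps, comul, counit, D.dag_comp, D.dag_dag]

lemma dag_eps : D.dag S.eps = S.eta := by
  simp only [eta, eps, comul, counit, D.dag_comp, D.dag_dag]

/-- Coassociativity. -/
lemma comul_assoc' :
    S.comul ≫ (𝟙 Z ⊗ₘ S.comul) ≫ (α_ Z Z Z).inv = S.comul ≫ (S.comul ⊗ₘ 𝟙 Z) := by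
  have h := congrArg D.dag S.mul_assoc'
  simpa only [D.dag_comp, D.dag_tensor, D.dag_id, D.dag_assoc, Category.assoc, comul]
    using h

/-- Left counit law. -/
lemma counit_comul : S.comul ≫ (S.counit ⊗ₘ 𝟙 Z) = (λ_ Z).inv := by
  have h := congrArg D.dag S.one_mul'
  simpa only [D.dag_comp, D.dag_tensor, D.dag_id, D.dag_lUnit, comul, counit] using h

/-- Right counit law. -/
lemma comul_counit : S.comul ≫ (𝟙 Z ⊗ₘ S.counit) = (ρ_ Z).inv := by
  have h := congrArg D.dag S.mul_one'
  simpa only [D.dag_comp, D.dag_tensor, D.dag_id, D.dag_rUnit, comul, counit] using h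

/-- Cocommutativity. -/
lemma comul_braiding : S.comul ≫ (β_ Z Z).hom = S.comul := by
  have h := congrArg D.dag S.mul_comm'
  rw [D.dag_comp, D.dag_braid, braiding_self_inv] at h
  simpa only [comul] using h

lemma eta_braiding : S.eta ≫ (β_ Z Z).hom = S.eta := by
  simp only [eta, Category.assoc, S.comul_braiding]

lemma braiding_eps : (β_ Z Z).hom ≫ S.eps = S.eps := by
  simp only [eps, ← Category.assoc, S.mul_comm']

/-- The second Frobenius law, the dagger of the first. -/
lemma frobenius2 :
    (S.comul ⊗ₘ 𝟙 Z) ≫ (α_ Z Z Z).hom ≫ (𝟙 Z ⊗ₘ S.mul) = S.mul ≫ S.comul := by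
  have h := congrArg D.dag S.frobenius'
  simpa only [D.dag_comp, D.dag_tensor, D.dag_id, D.dag_assoc_inv, Category.assoc, comul,
    D.dag_dag] using h

/- Whiskered versions. -/
lemma comul_counit_w : S.comul ≫ (Z ◁ S.counit) = (ρ_ Z).inv := by
  rw [← id_tensorHom]; exact S.comul_counit

lemma counit_comul_w : S.comul ≫ (S.counit ▷ Z) = (λ_ Z).inv := by
  rw [← tensorHom_id]; exact S.counit_comul

lemma one_mul_w : (S.unit ▷ Z) ≫ S.mul = (λ_ Z).hom := by
  rw [← tensorHom_id]; exact S.one_mul'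

lemma mul_one_w : (Z ◁ S.unit) ≫ S.mul = (ρ_ Z).hom := by
  rw [← id_tensorHom]; exact S.mul_one'

lemma frobenius1_w :
    (Z ◁ S.comul) ≫ (α_ Z Z Z).inv ≫ (S.mul ▷ Z) = S.mul ≫ S.comul := by
  rw [← id_tensorHom, ← tensorHom_id]; exact S.frobenius'

lemma frobenius2_w :
    (S.comul ▷ Z) ≫ (α_ Z Z Z).hom ≫ (Z ◁ S.mul) = S.mul ≫ S.comul := by
  rw [← id_tensorHom, ← tensorHom_id]; exact S.frobenius2

lemma mul_assoc_w :
    (α_ Z Z Z).hom ≫ (Z ◁ S.mul) ≫ S.mul = (S.mul ▷ Z) ≫ S.mul := by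
  rw [← id_tensorHom, ← tensorHom_id]; exact S.mul_assoc'

lemma comul_assoc_w :
    S.comul ≫ (Z ◁ S.comul) ≫ (α_ Z Z Z).inv = S.comul ≫ (S.comul ▷ Z) := by
  rw [← id_tensorHom, ← tensorHom_id]; exact S.comul_assoc'

/-- `I1`: multiplying with one leg of the Bell state is comultiplication. -/
lemma I1 : (ρ_ Z).inv ≫ (Z ◁ S.eta) ≫ (α_ Z Z Z).inv ≫ (S.mul ▷ Z) = S.comul := by
  have : Z ◁ S.eta = (Z ◁ S.unit) ≫ (Z ◁ S.comul) := by
    rw [← MonoidalCategory.whiskerLeft_comp]; rfl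
  rw [this]
  slice_lhs 3 5 => rw [S.frobenius1_w]
  slice_lhs 2 3 => rw [S.mul_one_w]
  simp

lemma I1' : (λ_ Z).inv ≫ (S.eta ▷ Z) ≫ (α_ Z Z Z).hom ≫ (Z ◁ S.mul) = S.comul := by
  have : S.eta ▷ Z = (S.unit ▷ Z) ≫ (S.comul ▷ Z) := by
    rw [← comp_whiskerRight]; rfl
  rw [this]
  slice_lhs 3 5 => rw [S.frobenius2_w]
  slice_lhs 2 3 => rw [S.one_mul_w]
  simp

/-- `E1`: a cap on one leg of a comultiplication is multiplication. -/
lemma E1 : (Z ◁ S.comul) ≫ (α_ Z Z Z).inv ≫ (S.eps ▷ Z) ≫ (λ_ Z).hom = S.mul := by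
  have : S.eps ▷ Z = (S.mul ▷ Z) ≫ (S.counit ▷ Z) := by
    rw [← comp_whiskerRight]; rfl
  rw [this]
  slice_lhs 1 3 => rw [S.frobenius1_w]
  slice_lhs 2 3 => rw [S.counit_comul_w]
  simp

lemma E1' : (S.comul ▷ Z) ≫ (α_ Z Z Z).hom ≫ (Z ◁ S.eps) ≫ (ρ_ Z).hom = S.mul := by
  have : Z ◁ S.eps = (Z ◁ S.mul) ≫ (Z ◁ S.counit) := by
    rw [← MonoidalCategory.whiskerLeft_comp]; rfl
  rw [this]
  slice_lhs 1 3 => rw [S.frobenius2_w]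
  slice_lhs 2 3 => rw [S.comul_counit_w]
  simp

/-- The first snake identity. -/
lemma snake1 :
    (λ_ Z).inv ≫ (S.eta ▷ Z) ≫ (α_ Z Z Z).hom ≫ (Z ◁ S.eps) ≫ (ρ_ Z).hom = 𝟙 Z := by
  have : S.eta ▷ Z = (S.unit ▷ Z) ≫ (S.comul ▷ Z) := by
    rw [← comp_whiskerRight]; rfl
  rw [this]
  slice_lhs 3 6 => rw [S.E1']
  slice_lhs 2 3 => rw [S.one_mul_w]
  simp

/-- The second snake identity. -/
lemma snake2 :
    (ρ_ Z).inv ≫ (Z ◁ S.eta) ≫ (α_ Z Z Z).inv ≫ (S.eps ▷ Z) ≫ (λ_ Z).hom = 𝟙 Z := by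
  have : Z ◁ S.eta = (Z ◁ S.unit) ≫ (Z ◁ S.comul) := by
    rw [← MonoidalCategory.whiskerLeft_comp]; rfl
  rw [this]
  slice_lhs 3 6 => rw [S.E1]
  slice_lhs 2 3 => rw [S.mul_one_w]
  simp

/-- Associativity absorbed into the cap. -/
lemma mul_eps_assoc :
    (S.mul ▷ Z) ≫ S.eps = (α_ Z Z Z).hom ≫ (Z ◁ S.mul) ≫ S.eps := by
  simp only [eps]
  slice_rhs 1 3 => rw [S.mul_assoc_w]
  simp

/-- Coassociativity for the Bell state. -/
lemma eta_comul_assoc :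
    S.eta ≫ (S.comul ▷ Z) = S.eta ≫ (Z ◁ S.comul) ≫ (α_ Z Z Z).inv := by
  simp only [eta, Category.assoc, S.comul_assoc_w]

end ClassicalStructure

/-- Commutativity of the convolution pattern. -/
lemma comul_tensor_mul_swap {W Z : C} (SW : ClassicalStructure D W)
    (SZ : ClassicalStructure D Z) (a b : W ⟶ Z) :
    SW.comul ≫ (a ⊗ₘ b) ≫ SZ.mul = SW.comul ≫ (b ⊗ₘ a) ≫ SZ.mul := by
  conv_lhs => rw [← SW.comul_braiding]
  slice_lhs 2 3 => rw [← BraidedCategory.braiding_naturality]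
  slice_lhs 3 4 => rw [SZ.mul_comm']

section Conjugation

open ClassicalStructure

variable {X Y : C} (XS : ClassicalStructure D X) (YS : ClassicalStructure D Y)

lemma conjugate_eq (f : X ⟶ Y) :
    conjugate D XS YS f =
      (λ_ X).inv ≫ (YS.eta ▷ X) ≫ (α_ Y Y X).hom ≫ (Y ◁ (D.dag f ▷ X)) ≫
        (Y ◁ XS.eps) ≫ (ρ_ Y).hom := by
  simp only [conjugate, id_tensorHom, tensorHom_id]

lemma dag_conjugate (f : X ⟶ Y) :
    D.dag (conjugate D XS YS f) =
      (ρ_ Y).inv ≫ (Y ◁ XS.eta) ≫ (Y ◁ (f ▷ X)) ≫ (α_ Y Y X).inv ≫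
        (YS.eps ▷ X) ≫ (λ_ X).hom := by
  rw [conjugate_eq]
  simp only [D.dag_comp, D.dag_whiskerLeft, D.dag_whiskerRight, D.dag_dag, D.dag_assoc,
    D.dag_lUnit_inv, D.dag_rUnit, XS.dag_eps, YS.dag_eta, Category.assoc]

lemma dag_convol (f g : X ⟶ Y) :
    D.dag (XS.comul ≫ (f ⊗ₘ g) ≫ YS.mul) =
      YS.comul ≫ (D.dag f ⊗ₘ D.dag g) ≫ XS.mul := by
  simp only [D.dag_comp, D.dag_tensor, ClassicalStructure.comul, D.dag_dag, Category.assoc]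

/-- Conjugation distributes over convolution. -/
lemma conjugate_convol (f g : X ⟶ Y) :
    conjugate D XS YS (XS.comul ≫ (f ⊗ₘ g) ≫ YS.mul) =
      XS.comul ≫ (conjugate D XS YS f ⊗ₘ conjugate D XS YS g) ≫ YS.mul := by
  have L :
      conjugate D XS YS (XS.comul ≫ (f ⊗ₘ g) ≫ YS.mul) =
      𝟙 X ⊗≫ ((YS.eta ≫ (Y ◁ YS.comul)) ▷ X) ⊗≫ (Y ◁ (D.dag g ▷ (Y ⊗ X))) ⊗≫
        (Y ◁ (X ◁ (D.dag f ▷ X))) ⊗≫ (Y ◁ (X ◁ XS.mul)) ⊗≫ (Y ◁ XS.eps) ⊗≫ 𝟙 Y := by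
    rw [conjugate_eq, dag_convol XS YS f g, comul_tensor_mul_swap]
    calc
      (λ_ X).inv ≫ (YS.eta ▷ X) ≫ (α_ Y Y X).hom ≫
          (Y ◁ ((YS.comul ≫ (D.dag g ⊗ₘ D.dag f) ≫ XS.mul) ▷ X)) ≫
          (Y ◁ XS.eps) ≫ (ρ_ Y).hom
        = 𝟙 X ⊗≫ ((YS.eta ≫ (Y ◁ YS.comul)) ▷ X) ⊗≫ (Y ◁ (D.dag g ▷ (Y ⊗ X))) ⊗≫
            (Y ◁ (X ◁ (D.dag f ▷ X))) ⊗≫ (Y ◁ ((XS.mul ▷ X) ≫ XS.eps)) ⊗≫ 𝟙 Y := by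
          rw [MonoidalCategory.tensorHom_def]; monoidal
      _ = 𝟙 X ⊗≫ ((YS.eta ≫ (Y ◁ YS.comul)) ▷ X) ⊗≫ (Y ◁ (D.dag g ▷ (Y ⊗ X))) ⊗≫
            (Y ◁ (X ◁ (D.dag f ▷ X))) ⊗≫ (Y ◁ (X ◁ XS.mul)) ⊗≫ (Y ◁ XS.eps) ⊗≫ 𝟙 Y := by
          rw [XS.mul_eps_assoc]; monoidal
  have R :
      XS.comul ≫ (conjugate D XS YS f ⊗ₘ conjugate D XS YS g) ≫ YS.mul =
      𝟙 X ⊗≫ ((YS.eta ≫ (Y ◁ YS.comul)) ▷ X) ⊗≫ (Y ◁ (D.dag g ▷ (Y ⊗ X))) ⊗≫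
        (Y ◁ (X ◁ (D.dag f ▷ X))) ⊗≫ (Y ◁ (X ◁ XS.mul)) ⊗≫ (Y ◁ XS.eps) ⊗≫ 𝟙 Y := by
    rw [conjugate_eq XS YS f, conjugate_eq XS YS g]
    calc
      XS.comul ≫
          (((λ_ X).inv ≫ (YS.eta ▷ X) ≫ (α_ Y Y X).hom ≫ (Y ◁ (D.dag f ▷ X)) ≫
              (Y ◁ XS.eps) ≫ (ρ_ Y).hom) ⊗ₘ
            ((λ_ X).inv ≫ (YS.eta ▷ X) ≫ (α_ Y Y X).hom ≫ (Y ◁ (D.dag g ▷ X)) ≫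
              (Y ◁ XS.eps) ≫ (ρ_ Y).hom)) ≫ YS.mul
        = 𝟙 X ⊗≫ (𝟙_ C ◁ XS.comul ≫ (YS.eta ≫ (Y ◁ D.dag f)) ▷ (X ⊗ X)) ⊗≫
            (Y ◁ (XS.eps ▷ X)) ⊗≫ (Y ◁ ((YS.eta ≫ (Y ◁ D.dag g)) ▷ X)) ⊗≫
            (Y ◁ (Y ◁ XS.eps)) ⊗≫ (YS.mul ▷ 𝟙_ C) ⊗≫ 𝟙 Y := by
          rw [MonoidalCategory.tensorHom_def]; monoidal
      _ = 𝟙 X ⊗≫ ((YS.eta ≫ (Y ◁ D.dag f)) ▷ X ≫ (Y ⊗ X) ◁ XS.comul) ⊗≫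
            (Y ◁ (XS.eps ▷ X)) ⊗≫ (Y ◁ ((YS.eta ≫ (Y ◁ D.dag g)) ▷ X)) ⊗≫
            (Y ◁ (Y ◁ XS.eps)) ⊗≫ (YS.mul ▷ 𝟙_ C) ⊗≫ 𝟙 Y := by
          rw [whisker_exchange (YS.eta ≫ (Y ◁ D.dag f)) XS.comul]
      _ = 𝟙 X ⊗≫ ((YS.eta ≫ (Y ◁ D.dag f)) ▷ X) ⊗≫
            (Y ◁ ((X ◁ XS.comul) ≫ (α_ X X X).inv ≫ (XS.eps ▷ X) ≫ (λ_ X).hom)) ⊗≫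
            (Y ◁ ((YS.eta ≫ (Y ◁ D.dag g)) ▷ X)) ⊗≫
            (Y ◁ (Y ◁ XS.eps)) ⊗≫ (YS.mul ▷ 𝟙_ C) ⊗≫ 𝟙 Y := by
          monoidal
      _ = 𝟙 X ⊗≫ ((YS.eta ≫ (Y ◁ D.dag f)) ▷ X) ⊗≫ (Y ◁ XS.mul) ⊗≫
            (Y ◁ ((YS.eta ≫ (Y ◁ D.dag g)) ▷ X)) ⊗≫
            (Y ◁ (Y ◁ XS.eps)) ⊗≫ (YS.mul ▷ 𝟙_ C) ⊗≫ 𝟙 Y := by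
          rw [XS.E1]
      _ = 𝟙 X ⊗≫ ((YS.eta ≫ (Y ◁ D.dag f)) ▷ X) ⊗≫
            (Y ◁ ((𝟙_ C ◁ XS.mul) ≫ (YS.eta ≫ (Y ◁ D.dag g)) ▷ X)) ⊗≫
            (Y ◁ (Y ◁ XS.eps)) ⊗≫ (YS.mul ▷ 𝟙_ C) ⊗≫ 𝟙 Y := by
          monoidal
      _ = 𝟙 X ⊗≫ ((YS.eta ≫ (Y ◁ D.dag f)) ▷ X) ⊗≫
            (Y ◁ ((YS.eta ≫ (Y ◁ D.dag g)) ▷ (X ⊗ X) ≫ (Y ⊗ X) ◁ XS.mul)) ⊗≫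
            (Y ◁ (Y ◁ XS.eps)) ⊗≫ (YS.mul ▷ 𝟙_ C) ⊗≫ 𝟙 Y := by
          rw [whisker_exchange (YS.eta ≫ (Y ◁ D.dag g)) XS.mul]
      _ = 𝟙 X ⊗≫ (YS.eta ▷ X) ⊗≫ ((Y ◁ D.dag f) ▷ X) ⊗≫ (Y ◁ (YS.eta ▷ (X ⊗ X))) ⊗≫
            ((Y ⊗ Y) ◁ ((D.dag g ▷ (X ⊗ X)) ≫ (X ◁ XS.mul) ≫ XS.eps) ≫
              (YS.mul ▷ 𝟙_ C)) ⊗≫ 𝟙 Y := by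
          monoidal
      _ = 𝟙 X ⊗≫ (YS.eta ▷ X) ⊗≫ ((Y ◁ D.dag f) ▷ X) ⊗≫ (Y ◁ (YS.eta ▷ (X ⊗ X))) ⊗≫
            ((YS.mul ▷ (Y ⊗ (X ⊗ X))) ≫
              (Y ◁ ((D.dag g ▷ (X ⊗ X)) ≫ (X ◁ XS.mul) ≫ XS.eps))) ⊗≫ 𝟙 Y := by
          rw [whisker_exchange YS.mul ((D.dag g ▷ (X ⊗ X)) ≫ (X ◁ XS.mul) ≫ XS.eps)]
      _ = 𝟙 X ⊗≫ (YS.eta ▷ X) ⊗≫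
            (((Y ◁ D.dag f) ≫
              (((ρ_ Y).inv ≫ (Y ◁ YS.eta) ≫ (α_ Y Y Y).inv ≫ (YS.mul ▷ Y)) ▷ X)) ▷ X) ⊗≫
            (Y ◁ (D.dag g ▷ (X ⊗ X))) ⊗≫ (Y ◁ (X ◁ XS.mul)) ⊗≫ (Y ◁ XS.eps) ⊗≫ 𝟙 Y := by
          monoidal
      _ = 𝟙 X ⊗≫ (YS.eta ▷ X) ⊗≫
            (((((ρ_ Y).inv ≫ (Y ◁ YS.eta) ≫ (α_ Y Y Y).inv ≫ (YS.mul ▷ Y)) ▷ Y) ≫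
              ((Y ⊗ Y) ◁ D.dag f)) ▷ X) ⊗≫
            (Y ◁ (D.dag g ▷ (X ⊗ X))) ⊗≫ (Y ◁ (X ◁ XS.mul)) ⊗≫ (Y ◁ XS.eps) ⊗≫ 𝟙 Y := by
          rw [whisker_exchange
            ((ρ_ Y).inv ≫ (Y ◁ YS.eta) ≫ (α_ Y Y Y).inv ≫ (YS.mul ▷ Y)) (D.dag f)]
      _ = 𝟙 X ⊗≫ (YS.eta ▷ X) ⊗≫ (((YS.comul ▷ Y) ≫ ((Y ⊗ Y) ◁ D.dag f)) ▷ X) ⊗≫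
            (Y ◁ (D.dag g ▷ (X ⊗ X))) ⊗≫ (Y ◁ (X ◁ XS.mul)) ⊗≫ (Y ◁ XS.eps) ⊗≫ 𝟙 Y := by
          rw [YS.I1]
      _ = 𝟙 X ⊗≫ ((YS.eta ≫ (YS.comul ▷ Y)) ▷ X) ⊗≫
            (Y ◁ ((Y ◁ (D.dag f ▷ X)) ≫ (D.dag g ▷ (X ⊗ X)))) ⊗≫
            (Y ◁ (X ◁ XS.mul)) ⊗≫ (Y ◁ XS.eps) ⊗≫ 𝟙 Y := by
          monoidal
      _ = 𝟙 X ⊗≫ ((YS.eta ≫ (YS.comul ▷ Y)) ▷ X) ⊗≫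
            (Y ◁ ((D.dag g ▷ (Y ⊗ X)) ≫ (X ◁ (D.dag f ▷ X)))) ⊗≫
            (Y ◁ (X ◁ XS.mul)) ⊗≫ (Y ◁ XS.eps) ⊗≫ 𝟙 Y := by
          rw [whisker_exchange (D.dag g) (D.dag f ▷ X)]
      _ = 𝟙 X ⊗≫ ((YS.eta ≫ (Y ◁ YS.comul) ≫ (α_ Y Y Y).inv) ▷ X) ⊗≫
            (Y ◁ (D.dag g ▷ (Y ⊗ X))) ⊗≫ (Y ◁ (X ◁ (D.dag f ▷ X))) ⊗≫
            (Y ◁ (X ◁ XS.mul)) ⊗≫ (Y ◁ XS.eps) ⊗≫ 𝟙 Y := by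
          rw [← Category.assoc YS.eta, YS.eta_comul_assoc]; monoidal
      _ = 𝟙 X ⊗≫ ((YS.eta ≫ (Y ◁ YS.comul)) ▷ X) ⊗≫ (Y ◁ (D.dag g ▷ (Y ⊗ X))) ⊗≫
            (Y ◁ (X ◁ (D.dag f ▷ X))) ⊗≫ (Y ◁ (X ◁ XS.mul)) ⊗≫ (Y ◁ XS.eps) ⊗≫ 𝟙 Y := by
          monoidal
  rw [L, ← R]

/-- The right-handed transpose equals the left-handed transpose. -/
lemma transpose_mirror (f : X ⟶ Y) :
    (ρ_ Y).inv ≫ (Y ◁ XS.eta) ≫ (Y ◁ (f ▷ X)) ≫ (α_ Y Y X).inv ≫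
        (YS.eps ▷ X) ≫ (λ_ X).hom =
      (λ_ Y).inv ≫ (XS.eta ▷ Y) ≫ (α_ X X Y).hom ≫ (X ◁ (f ▷ Y)) ≫
        (X ◁ YS.eps) ≫ (ρ_ X).hom := by
  have h1 : (ρ_ Y).inv ≫ (Y ◁ XS.eta) =
      (λ_ Y).inv ≫ (XS.eta ▷ Y) ≫ (β_ (X ⊗ X) Y).hom := by
    rw [BraidedCategory.braiding_naturality_left]
    have : (β_ (𝟙_ C) Y).hom = (λ_ Y).hom ≫ (ρ_ Y).inv := by
      rw [Iso.eq_comp_inv]; exact braiding_rightUnitor Y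
    rw [this]; simp
  calc
    (ρ_ Y).inv ≫ (Y ◁ XS.eta) ≫ (Y ◁ (f ▷ X)) ≫ (α_ Y Y X).inv ≫
        (YS.eps ▷ X) ≫ (λ_ X).hom
      = (λ_ Y).inv ≫ (XS.eta ▷ Y) ≫ ((β_ (X ⊗ X) Y).hom ≫ (Y ◁ (f ▷ X))) ≫
          (α_ Y Y X).inv ≫ (YS.eps ▷ X) ≫ (λ_ X).hom := by
        rw [← Category.assoc (ρ_ Y).inv, h1]; simp only [Category.assoc]
    _ = (λ_ Y).inv ≫ (XS.eta ▷ Y) ≫ (((f ▷ X) ▷ Y) ≫ (β_ (Y ⊗ X) Y).hom) ≫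
          (α_ Y Y X).inv ≫ (YS.eps ▷ X) ≫ (λ_ X).hom := by
        rw [BraidedCategory.braiding_naturality_left (f ▷ X) Y]
    _ = 𝟙 Y ⊗≫ (XS.eta ▷ Y) ⊗≫ ((f ▷ X) ▷ Y) ⊗≫ (Y ◁ (β_ X Y).hom) ⊗≫
          (((β_ Y Y).hom ≫ YS.eps) ▷ X) ⊗≫ 𝟙 X := by
        rw [BraidedCategory.braiding_tensor_left_hom]; monoidal
    _ = 𝟙 Y ⊗≫ (XS.eta ▷ Y) ⊗≫ ((f ▷ X) ▷ Y) ⊗≫ (Y ◁ (β_ X Y).hom) ⊗≫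
          (YS.eps ▷ X) ⊗≫ 𝟙 X := by
        rw [YS.braiding_eps]
    _ = 𝟙 Y ⊗≫ ((XS.eta ≫ (β_ X X).hom) ▷ Y) ⊗≫ ((f ▷ X) ▷ Y) ⊗≫
          (Y ◁ (β_ X Y).hom) ⊗≫ (YS.eps ▷ X) ⊗≫ 𝟙 X := by
        rw [XS.eta_braiding]
    _ = 𝟙 Y ⊗≫ (XS.eta ▷ Y) ⊗≫ ((((β_ X X).hom ≫ (f ▷ X)) ▷ Y)) ⊗≫
          (Y ◁ (β_ X Y).hom) ⊗≫ (YS.eps ▷ X) ⊗≫ 𝟙 X := by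
        monoidal
    _ = 𝟙 Y ⊗≫ (XS.eta ▷ Y) ⊗≫ ((((X ◁ f) ≫ (β_ X Y).hom) ▷ Y)) ⊗≫
          (Y ◁ (β_ X Y).hom) ⊗≫ (YS.eps ▷ X) ⊗≫ 𝟙 X := by
        rw [BraidedCategory.braiding_naturality_right X f]
    _ = 𝟙 Y ⊗≫ (XS.eta ▷ Y) ⊗≫ ((X ◁ f) ▷ Y) ⊗≫
          (((β_ X Y).hom ▷ Y) ≫ (α_ Y X Y).hom ≫ (Y ◁ (β_ X Y).hom)) ⊗≫
          (YS.eps ▷ X) ⊗≫ 𝟙 X := by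
        monoidal
    _ = 𝟙 Y ⊗≫ (XS.eta ▷ Y) ⊗≫ ((X ◁ f) ▷ Y) ⊗≫
          ((α_ X Y Y).hom ≫ (β_ X (Y ⊗ Y)).hom ≫ (α_ Y Y X).hom) ⊗≫
          (YS.eps ▷ X) ⊗≫ 𝟙 X := by
        rw [← BraidedCategory.hexagon_forward]
    _ = 𝟙 Y ⊗≫ (XS.eta ▷ Y) ⊗≫ ((X ◁ f) ▷ Y) ⊗≫
          ((β_ X (Y ⊗ Y)).hom ≫ (YS.eps ▷ X)) ⊗≫ 𝟙 X := by
        monoidal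
    _ = 𝟙 Y ⊗≫ (XS.eta ▷ Y) ⊗≫ ((X ◁ f) ▷ Y) ⊗≫
          ((X ◁ YS.eps) ≫ (β_ X (𝟙_ C)).hom) ⊗≫ 𝟙 X := by
        rw [← BraidedCategory.braiding_naturality_right X YS.eps]
    _ = 𝟙 Y ⊗≫ (XS.eta ▷ Y) ⊗≫ ((X ◁ f) ▷ Y) ⊗≫ (X ◁ YS.eps) ⊗≫
          ((β_ X (𝟙_ C)).hom ≫ (λ_ X).hom) ⊗≫ 𝟙 X := by
        monoidal
    _ = 𝟙 Y ⊗≫ (XS.eta ▷ Y) ⊗≫ ((X ◁ f) ▷ Y) ⊗≫ (X ◁ YS.eps) ⊗≫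
          (ρ_ X).hom ⊗≫ 𝟙 X := by
        rw [braiding_leftUnitor]
    _ = (λ_ Y).inv ≫ (XS.eta ▷ Y) ≫ (α_ X X Y).hom ≫ (X ◁ (f ▷ Y)) ≫
          (X ◁ YS.eps) ≫ (ρ_ X).hom := by
        monoidal

lemma conjugate_conjugate (f : X ⟶ Y) :
    conjugate D XS YS (conjugate D XS YS f) = f := by
  rw [conjugate_eq, dag_conjugate]
  calc
    (λ_ X).inv ≫ (YS.eta ▷ X) ≫ (α_ Y Y X).hom ≫
        (Y ◁ (((ρ_ Y).inv ≫ (Y ◁ XS.eta) ≫ (Y ◁ (f ▷ X)) ≫ (α_ Y Y X).inv ≫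
          (YS.eps ▷ X) ≫ (λ_ X).hom) ▷ X)) ≫ (Y ◁ XS.eps) ≫ (ρ_ Y).hom
      = 𝟙 X ⊗≫ (YS.eta ▷ X ≫
            (Y ⊗ Y) ◁ ((λ_ X).inv ≫ XS.eta ▷ X ≫ (α_ X X X).hom ≫ f ▷ (X ⊗ X))) ⊗≫
          Y ◁ (YS.eps ▷ (X ⊗ X)) ⊗≫ Y ◁ XS.eps ⊗≫ 𝟙 Y := by
        monoidal
    _ = 𝟙 X ⊗≫ (𝟙_ C ◁ ((λ_ X).inv ≫ XS.eta ▷ X ≫ (α_ X X X).hom ≫ f ▷ (X ⊗ X)) ≫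
            YS.eta ▷ (Y ⊗ (X ⊗ X))) ⊗≫
          Y ◁ (YS.eps ▷ (X ⊗ X)) ⊗≫ Y ◁ XS.eps ⊗≫ 𝟙 Y := by
        rw [whisker_exchange]
    _ = 𝟙 X ⊗≫ ((λ_ X).inv ≫ XS.eta ▷ X ≫ (α_ X X X).hom ≫ f ▷ (X ⊗ X)) ⊗≫
          (((λ_ Y).inv ≫ YS.eta ▷ Y ≫ (α_ Y Y Y).hom ≫ Y ◁ YS.eps ≫ (ρ_ Y).hom) ▷ (X ⊗ X)) ⊗≫
          Y ◁ XS.eps ⊗≫ 𝟙 Y := by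
        monoidal
    _ = 𝟙 X ⊗≫ ((λ_ X).inv ≫ XS.eta ▷ X ≫ (α_ X X X).hom ≫ f ▷ (X ⊗ X)) ⊗≫
          (𝟙 Y ▷ (X ⊗ X)) ⊗≫ Y ◁ XS.eps ⊗≫ 𝟙 Y := by
        rw [YS.snake1]
    _ = 𝟙 X ⊗≫ (λ_ X).inv ≫ XS.eta ▷ X ≫ (α_ X X X).hom ≫
          (f ▷ (X ⊗ X) ≫ Y ◁ XS.eps) ⊗≫ 𝟙 Y := by
        monoidal
    _ = 𝟙 X ⊗≫ (λ_ X).inv ≫ XS.eta ▷ X ≫ (α_ X X X).hom ≫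
          (X ◁ XS.eps ≫ f ▷ 𝟙_ C) ⊗≫ 𝟙 Y := by
        rw [← whisker_exchange]
    _ = ((λ_ X).inv ≫ XS.eta ▷ X ≫ (α_ X X X).hom ≫ X ◁ XS.eps ≫ (ρ_ X).hom) ≫ f := by
        monoidal
    _ = f := by rw [XS.snake1, Category.id_comp]

lemma conjugate_self_of_relation (r : X ⟶ Y) (hr : IsRelation D XS YS r) :
    conjugate D XS YS r = r := by
  have hr' : r = XS.comul ≫ (conjugate D XS YS r ⊗ₘ r) ≫ YS.mul := hr
  conv_lhs => rw [hr']
  rw [conjugate_convol, conjugate_conjugate, comul_tensor_mul_swap]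
  exact hr'.symm

/-- The would-be positive witness of classicality. -/
def eMap (r : X ⟶ Y) : X ⊗ Y ⟶ X ⊗ Y :=
  (XS.comul ⊗ₘ 𝟙 Y) ≫ ((𝟙 X ⊗ₘ r) ⊗ₘ 𝟙 Y) ≫ (α_ X Y Y).hom ≫ (𝟙 X ⊗ₘ YS.mul)

lemma eMap_w (r : X ⟶ Y) :
    eMap XS YS r =
      (XS.comul ▷ Y) ≫ ((X ◁ r) ▷ Y) ≫ (α_ X Y Y).hom ≫ (X ◁ YS.mul) := by
  simp only [eMap, tensorHom_id, id_tensorHom]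

/-- The symmetric middle form of `eMap`. -/
lemma eMap_eq_mid (r : X ⟶ Y) :
    eMap XS YS r =
      𝟙 (X ⊗ Y) ⊗≫ (XS.comul ▷ Y) ⊗≫ ((X ⊗ X) ◁ YS.comul) ⊗≫
        (X ◁ (r ▷ (Y ⊗ Y))) ⊗≫ (X ◁ (YS.eps ▷ Y)) ⊗≫ 𝟙 (X ⊗ Y) := by
  rw [eMap_w, ← YS.E1]
  calc
    (XS.comul ▷ Y) ≫ ((X ◁ r) ▷ Y) ≫ (α_ X Y Y).hom ≫
        (X ◁ ((Y ◁ YS.comul) ≫ (α_ Y Y Y).inv ≫ (YS.eps ▷ Y) ≫ (λ_ Y).hom))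
      = 𝟙 (X ⊗ Y) ⊗≫ (XS.comul ▷ Y) ⊗≫
          (((X ◁ r) ▷ Y) ≫ ((X ⊗ Y) ◁ YS.comul)) ⊗≫
          (X ◁ (YS.eps ▷ Y)) ⊗≫ 𝟙 (X ⊗ Y) := by monoidal
    _ = 𝟙 (X ⊗ Y) ⊗≫ (XS.comul ▷ Y) ⊗≫
          (((X ⊗ X) ◁ YS.comul) ≫ ((X ◁ r) ▷ (Y ⊗ Y))) ⊗≫
          (X ◁ (YS.eps ▷ Y)) ⊗≫ 𝟙 (X ⊗ Y) := by
        rw [← whisker_exchange (X ◁ r) YS.comul]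
    _ = 𝟙 (X ⊗ Y) ⊗≫ (XS.comul ▷ Y) ⊗≫ ((X ⊗ X) ◁ YS.comul) ⊗≫
          (X ◁ (r ▷ (Y ⊗ Y))) ⊗≫ (X ◁ (YS.eps ▷ Y)) ⊗≫ 𝟙 (X ⊗ Y) := by monoidal

lemma dag_eMap (r : X ⟶ Y) (hcon : conjugate D XS YS r = r) :
    D.dag (eMap XS YS r) = eMap XS YS r := by
  have hdagr : D.dag r =
      (λ_ Y).inv ≫ (XS.eta ▷ Y) ≫ (α_ X X Y).hom ≫ (X ◁ (r ▷ Y)) ≫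
        (X ◁ YS.eps) ≫ (ρ_ X).hom := by
    conv_lhs => rw [← hcon]
    rw [dag_conjugate, transpose_mirror]
  have hdagE : D.dag (eMap XS YS r) =
      (X ◁ YS.comul) ≫ (α_ X Y Y).inv ≫ ((X ◁ D.dag r) ▷ Y) ≫ (XS.mul ▷ Y) := by
    rw [eMap_w]
    simp only [D.dag_comp, D.dag_whiskerLeft, D.dag_whiskerRight, D.dag_assoc,
      ClassicalStructure.comul, D.dag_dag, Category.assoc]
  rw [hdagE, hdagr, eMap_eq_mid]
  calc
    (X ◁ YS.comul) ≫ (α_ X Y Y).inv ≫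
        ((X ◁ ((λ_ Y).inv ≫ (XS.eta ▷ Y) ≫ (α_ X X Y).hom ≫ (X ◁ (r ▷ Y)) ≫
          (X ◁ YS.eps) ≫ (ρ_ X).hom)) ▷ Y) ≫ (XS.mul ▷ Y)
      = 𝟙 (X ⊗ Y) ⊗≫ (X ◁ YS.comul) ⊗≫ (X ◁ (XS.eta ▷ (Y ⊗ Y))) ⊗≫
          (((X ⊗ X) ◁ ((r ▷ (Y ⊗ Y)) ≫ (α_ Y Y Y).inv ≫ (YS.eps ▷ Y) ≫
            (λ_ Y).hom)) ≫ (XS.mul ▷ Y)) ⊗≫ 𝟙 (X ⊗ Y) := by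
        monoidal
    _ = 𝟙 (X ⊗ Y) ⊗≫ (X ◁ YS.comul) ⊗≫ (X ◁ (XS.eta ▷ (Y ⊗ Y))) ⊗≫
          ((XS.mul ▷ (X ⊗ (Y ⊗ Y))) ≫
            (X ◁ ((r ▷ (Y ⊗ Y)) ≫ (α_ Y Y Y).inv ≫ (YS.eps ▷ Y) ≫
              (λ_ Y).hom))) ⊗≫ 𝟙 (X ⊗ Y) := by
        rw [whisker_exchange XS.mul
          ((r ▷ (Y ⊗ Y)) ≫ (α_ Y Y Y).inv ≫ (YS.eps ▷ Y) ≫ (λ_ Y).hom)]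
    _ = 𝟙 (X ⊗ Y) ⊗≫ (X ◁ YS.comul) ⊗≫
          ((((ρ_ X).inv ≫ (X ◁ XS.eta) ≫ (α_ X X X).inv ≫ (XS.mul ▷ X)) ▷ (Y ⊗ Y))) ⊗≫
          (X ◁ (r ▷ (Y ⊗ Y))) ⊗≫ (X ◁ (YS.eps ▷ Y)) ⊗≫ 𝟙 (X ⊗ Y) := by
        monoidal
    _ = 𝟙 (X ⊗ Y) ⊗≫ ((X ◁ YS.comul) ≫ (XS.comul ▷ (Y ⊗ Y))) ⊗≫
          (X ◁ (r ▷ (Y ⊗ Y))) ⊗≫ (X ◁ (YS.eps ▷ Y)) ⊗≫ 𝟙 (X ⊗ Y) := by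
        rw [XS.I1]; monoidal
    _ = 𝟙 (X ⊗ Y) ⊗≫ ((XS.comul ▷ Y) ≫ ((X ⊗ X) ◁ YS.comul)) ⊗≫
          (X ◁ (r ▷ (Y ⊗ Y))) ⊗≫ (X ◁ (YS.eps ▷ Y)) ⊗≫ 𝟙 (X ⊗ Y) := by
        rw [whisker_exchange XS.comul YS.comul]
    _ = 𝟙 (X ⊗ Y) ⊗≫ (XS.comul ▷ Y) ⊗≫ ((X ⊗ X) ◁ YS.comul) ⊗≫
          (X ◁ (r ▷ (Y ⊗ Y))) ⊗≫ (X ◁ (YS.eps ▷ Y)) ⊗≫ 𝟙 (X ⊗ Y) := by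
        monoidal

lemma eMap_idem (r : X ⟶ Y) (hr2 : r = XS.comul ≫ (r ⊗ₘ r) ≫ YS.mul) :
    eMap XS YS r ≫ eMap XS YS r = eMap XS YS r := by
  have key : (XS.comul ▷ Y) ≫ (α_ X X Y).hom ≫ (X ◁ ((r ▷ Y) ≫ YS.mul)) ≫
      (r ▷ Y) ≫ YS.mul = ((XS.comul ≫ (r ⊗ₘ r) ≫ YS.mul) ▷ Y) ≫ YS.mul := by
    calc
      (XS.comul ▷ Y) ≫ (α_ X X Y).hom ≫ (X ◁ ((r ▷ Y) ≫ YS.mul)) ≫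
          (r ▷ Y) ≫ YS.mul
        = 𝟙 (X ⊗ Y) ⊗≫ (XS.comul ▷ Y) ⊗≫
            ((X ◁ ((r ▷ Y) ≫ YS.mul)) ≫ (r ▷ Y)) ⊗≫ YS.mul ⊗≫ 𝟙 Y := by monoidal
      _ = 𝟙 (X ⊗ Y) ⊗≫ (XS.comul ▷ Y) ⊗≫
            ((r ▷ (X ⊗ Y)) ≫ (Y ◁ ((r ▷ Y) ≫ YS.mul))) ⊗≫ YS.mul ⊗≫ 𝟙 Y := by
          rw [← whisker_exchange r ((r ▷ Y) ≫ YS.mul)]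
      _ = 𝟙 (X ⊗ Y) ⊗≫ (XS.comul ▷ Y) ⊗≫ ((r ▷ X) ▷ Y) ⊗≫ ((Y ◁ r) ▷ Y) ⊗≫
            ((α_ Y Y Y).hom ≫ (Y ◁ YS.mul) ≫ YS.mul) ⊗≫ 𝟙 Y := by monoidal
      _ = 𝟙 (X ⊗ Y) ⊗≫ (XS.comul ▷ Y) ⊗≫ ((r ▷ X) ▷ Y) ⊗≫ ((Y ◁ r) ▷ Y) ⊗≫
            ((YS.mul ▷ Y) ≫ YS.mul) ⊗≫ 𝟙 Y := by
          rw [YS.mul_assoc_w]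
      _ = ((XS.comul ≫ (r ⊗ₘ r) ≫ YS.mul) ▷ Y) ≫ YS.mul := by
          rw [MonoidalCategory.tensorHom_def]; monoidal
  calc
    eMap XS YS r ≫ eMap XS YS r
      = 𝟙 (X ⊗ Y) ⊗≫ (XS.comul ▷ Y) ⊗≫
          ((X ◁ ((r ▷ Y) ≫ YS.mul)) ≫ (XS.comul ▷ Y)) ⊗≫
          (X ◁ ((r ▷ Y) ≫ YS.mul)) ⊗≫ 𝟙 (X ⊗ Y) := by
        rw [eMap_w]; monoidal
    _ = 𝟙 (X ⊗ Y) ⊗≫ (XS.comul ▷ Y) ⊗≫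
          ((XS.comul ▷ (X ⊗ Y)) ≫ ((X ⊗ X) ◁ ((r ▷ Y) ≫ YS.mul))) ⊗≫
          (X ◁ ((r ▷ Y) ≫ YS.mul)) ⊗≫ 𝟙 (X ⊗ Y) := by
        rw [whisker_exchange XS.comul ((r ▷ Y) ≫ YS.mul)]
    _ = 𝟙 (X ⊗ Y) ⊗≫ ((XS.comul ≫ (XS.comul ▷ X)) ▷ Y) ⊗≫
          ((X ⊗ X) ◁ ((r ▷ Y) ≫ YS.mul)) ⊗≫
          (X ◁ ((r ▷ Y) ≫ YS.mul)) ⊗≫ 𝟙 (X ⊗ Y) := by monoidal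
    _ = 𝟙 (X ⊗ Y) ⊗≫ ((XS.comul ≫ (X ◁ XS.comul) ≫ (α_ X X X).inv) ▷ Y) ⊗≫
          ((X ⊗ X) ◁ ((r ▷ Y) ≫ YS.mul)) ⊗≫
          (X ◁ ((r ▷ Y) ≫ YS.mul)) ⊗≫ 𝟙 (X ⊗ Y) := by
        rw [XS.comul_assoc_w]
    _ = 𝟙 (X ⊗ Y) ⊗≫ (XS.comul ▷ Y) ⊗≫
          (X ◁ ((XS.comul ▷ Y) ≫ (α_ X X Y).hom ≫ (X ◁ ((r ▷ Y) ≫ YS.mul)) ≫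
            (r ▷ Y) ≫ YS.mul)) ⊗≫ 𝟙 (X ⊗ Y) := by monoidal
    _ = 𝟙 (X ⊗ Y) ⊗≫ (XS.comul ▷ Y) ⊗≫
          (X ◁ (((XS.comul ≫ (r ⊗ₘ r) ≫ YS.mul) ▷ Y) ≫ YS.mul)) ⊗≫ 𝟙 (X ⊗ Y) := by
        rw [key]
    _ = 𝟙 (X ⊗ Y) ⊗≫ (XS.comul ▷ Y) ⊗≫
          (X ◁ ((r ▷ Y) ≫ YS.mul)) ⊗≫ 𝟙 (X ⊗ Y) := by
        rw [← hr2]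
    _ = eMap XS YS r := by rw [eMap_w]; monoidal

end Conjugation

end Helpers

/-- every relation between classical structures is classical. -/
theorem relation_is_classical {X Y : C} (D : Dagger C)
    (XS : ClassicalStructure D X) (YS : ClassicalStructure D Y)
    (r : X ⟶ Y) (hr : IsRelation D XS YS r) :
    IsClassical D XS YS r := by
  have hcon : conjugate D XS YS r = r := conjugate_self_of_relation XS YS r hr
  have hr2 : r = XS.comul ≫ (r ⊗ₘ r) ≫ YS.mul := by
    have hr' : r = XS.comul ≫ (conjugate D XS YS r ⊗ₘ r) ≫ YS.mul := hr
    rwa [hcon] at hr'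
  exact ⟨X ⊗ Y, eMap XS YS r, by
    rw [dag_eMap XS YS r hcon, eMap_idem XS YS r hr2]; rfl⟩
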